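/- arXiv:1702.05079 — 11 statements merged into one kernel-verified Lean document; each statement's English description precedes it below -/
import Mathlib

section
/- Let A be an information system with witnesses. If Axioms (4),(5),(7),(8),(9) hold, then the two interpolation axioms (10) and (11) together are equivalent to the Global Interpolation Property: for all (i,X) ∈ Con and finite F ⊆ A, if (i,X) ⊢ F then there exists (j,Y) ∈ Con with (i,X) ⊢ j, (i,X) ⊢ Y, (j,Y) ⊢ F. -/
/-- The way-below (approximation) relation in a preorder: `x` approximates `y` if
for every directed set `S` whose least upper bound exists, `y ≤ sup S` implies
`x ≤ u` for some `u ∈ S`. -/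
def wayBelow {α : Type*} [Preorder α] (x y : α) : Prop :=
  ∀ S : Set α, DirectedOn (· ≤ ·) S → S.Nonempty →
    ∀ l, IsLUB S l → y ≤ l → ∃ u ∈ S, x ≤ u

/-- Information system with witnesses (Definition 3.1). -/
structure IWS (A : Type*) where
  Δ : A
  Con : A → Finset A → Prop
  ent : A → Finset A → A → Prop
  entCon : ∀ i X a, ent i X a → Con i X
  ax1 : ∀ i, Con i {i}
  ax2 : ∀ i X Y, Y ⊆ X → Con i X → Con i Y
  ax3 : ∀ i, ent i ∅ Δ
  ax4 : ∀ i X Y, Con i X → (∀ a ∈ Y, ent i X a) → Con i Y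
  ax5 : ∀ i X Y a, Con i X → Con i Y → X ⊆ Y → ent i X a → ent i Y a
  ax6 : ∀ i X Y a, Con i X → (∀ b ∈ Y, ent i X b) → ent i Y a → ent i X a
  ax7 : ∀ i X a, ent i X a → ∃ Z, Con i Z ∧ (∀ z ∈ Z, ent i X z) ∧ ent i Z a
  ax8 : ∀ i X Y, Con i X → (∀ y ∈ Y, ent i X y) → ∃ e, ent i X e ∧ Con e Y
  ax9 : ∀ i j, Con j {i} → ∀ X, Con i X → Con j X
  ax10 : ∀ i j X a, Con j {i} → Con i X → ent i X a → ent j X a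
  ax11 : ∀ i j X a, Con j {i} → Con i X → ent j X a → ent i X a

namespace IWS

variable {A : Type*}

/-- A state of an information system with witnesses (Definition 3.5):
finitely consistent, entailment-closed and derivable. -/
def state (S : IWS A) (x : Set A) : Prop :=
  (∀ F : Finset A, ↑F ⊆ x → ∃ i ∈ x, S.Con i F) ∧
  (∀ i ∈ x, ∀ X : Finset A, ↑X ⊆ x → ∀ a, S.Con i X → S.ent i X a → a ∈ x) ∧
  (∀ a ∈ x, ∃ i ∈ x, ∃ X : Finset A, ↑X ⊆ x ∧ S.Con i X ∧ S.ent i X a)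

/-- X-equivalence of witnesses (Definition 5.1). -/
def weq (S : IWS A) (X : Finset A) (i j : A) : Prop :=
  ∃ (n : ℕ) (a k : ℕ → A), a 0 = i ∧ a n = j ∧
    ∀ ν, 1 ≤ ν → ν ≤ n →
      S.Con (a (ν - 1)) X ∧ S.Con (a ν) X ∧
      S.Con (k ν) {a (ν - 1)} ∧ S.Con (k ν) {a ν}

end IWS

/-- Approximable mappings between information systems with witnesses (Definition 4.1). -/
structure AppMap {A A' : Type*} (S : IWS A) (S' : IWS A') where
  rel : A → Finset A → A' → Prop
  relCon : ∀ i X b, rel i X b → S.Con i X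
  am1 : rel S.Δ ∅ S'.Δ
  am2 : ∀ i X X' b, S.Con i X → S.Con i X' → X ⊆ X' → rel i X b → rel i X' b
  am3 : ∀ i X X' b, S.Con i X → (∀ a ∈ X', S.ent i X a) → rel i X' b → rel i X b
  am4 : ∀ i X b, S.Con i X → rel i X b →
    ∃ U, S.Con i U ∧ (∀ u ∈ U, S.ent i X u) ∧ rel i U b
  am5 : ∀ i X k Y b, S.Con i X → S'.Con k Y → rel i X k → (∀ y ∈ Y, rel i X y) →
    S'.ent k Y b → rel i X b
  am6 : ∀ i X b, S.Con i X → rel i X b →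
    ∃ d V, S'.Con d V ∧ rel i X d ∧ (∀ v ∈ V, rel i X v) ∧ S'.ent d V b
  am7 : ∀ i X F, S.Con i X → (∀ c ∈ F, rel i X c) → ∃ e, rel i X e ∧ S'.Con e F
  am8 : ∀ i j X b, S.Con j {i} → S.Con i X → rel i X b → rel j X b
  am9 : ∀ i j X b, S.Con j {i} → S.Con i X → rel j X b → rel i X b


/-- Lemma 3.2 (Global Interpolation Property). -/
theorem gip_equiv {A : Type*} (Δ : A) (Con : A → Finset A → Prop)
    (ent : A → Finset A → A → Prop)
    (ax4 : ∀ i X Y, Con i X → (∀ a ∈ Y, ent i X a) → Con i Y)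
    (ax5 : ∀ i X Y a, Con i X → Con i Y → X ⊆ Y → ent i X a → ent i Y a)
    (ax9 : ∀ i j, Con j {i} → ∀ X, Con i X → Con j X)
    (ax10 : ∀ i j X a, Con j {i} → Con i X → ent i X a → ent j X a)
    (ax11 : ∀ i j X a, Con j {i} → Con i X → ent j X a → ent i X a) :
    ((∀ i (X : Finset A) a, Con i X → ent i X a →
        ∃ Z, Con i Z ∧ (∀ z ∈ Z, ent i X z) ∧ ent i Z a) ∧
     (∀ i (X Y : Finset A), Con i X → (∀ y ∈ Y, ent i X y) →
        ∃ e, ent i X e ∧ Con e Y)) ↔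
    (∀ i (X F : Finset A), Con i X → (∀ a ∈ F, ent i X a) →
      ∃ j Y, Con j Y ∧ ent i X j ∧ (∀ y ∈ Y, ent i X y) ∧ ∀ a ∈ F, ent j Y a) := by
  classical
  constructor
  · rintro ⟨h7, h8⟩ i X F hX hF
    -- choose interpolants
    have hZ : ∀ a ∈ F, ∃ Z, Con i Z ∧ (∀ z ∈ Z, ent i X z) ∧ ent i Z a := by
      intro a ha; exact h7 i X a hX (hF a ha)
    choose Z hZCon hZent hZa using hZ
    set Y : Finset A := F.attach.biUnion (fun a => Z a.1 a.2) with hY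
    have hYent : ∀ y ∈ Y, ent i X y := by
      intro y hy
      simp only [hY, Finset.mem_biUnion, Finset.mem_attach, true_and] at hy
      obtain ⟨⟨a, ha⟩, hya⟩ := hy
      exact hZent a ha y hya
    have hYCon : Con i Y := ax4 i X Y hX hYent
    have hYa : ∀ a ∈ F, ent i Y a := by
      intro a ha
      refine ax5 i (Z a ha) Y a (hZCon a ha) hYCon ?_ (hZa a ha)
      intro z hz
      simp only [hY, Finset.mem_biUnion, Finset.mem_attach, true_and]
      exact ⟨⟨a, ha⟩, hz⟩
    obtain ⟨e, hie, heY⟩ := h8 i X Y hX hYent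
    refine ⟨e, Y, heY, hie, hYent, ?_⟩
    intro a ha
    have hCie : Con i {e} := ax4 i X {e} hX (by simpa using hie)
    exact ax11 e i Y a hCie heY (hYa a ha)
  · intro gip
    constructor
    · intro i X a hX ha
      obtain ⟨j, Y, hjY, hij, hiY, hja⟩ := gip i X {a} hX (by simpa using ha)
      have hCij : Con i {j} := ax4 i X {j} hX (by simpa using hij)
      have hiYCon : Con i Y := ax4 i X Y hX hiY
      exact ⟨Y, hiYCon, hiY, ax10 j i Y a hCij hjY (hja a (by simp))⟩
    · intro i X Y hX hY
      obtain ⟨j, Y', hjY', hij, _, hja⟩ := gip i X Y hX hY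
      exact ⟨j, hij, ax4 j Y' Y hjY' hja⟩
end

section
/- Let (A, Con, ⊢, Δ) be an information system with witnesses. Then for all a ∈ A and (i,X), (j,Y) ∈ Con: if (i,X) ⊢ j, (i,X) ⊢ Y, and (j,Y) ⊢ a, then (i,X) ⊢ a. -/
/-- Lemma 3.4: strong transitivity of entailment across witnesses. -/
theorem strong_trans {A : Type*} (S : IWS A) (i j : A) (X Y : Finset A) (a : A)
    (hX : S.Con i X) (hY : S.Con j Y)
    (hj : S.ent i X j) (hYent : ∀ y ∈ Y, S.ent i X y)
    (ha : S.ent j Y a) : S.ent i X a := by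
  classical
  have hall : ∀ b ∈ insert j Y, S.ent i X b := by
    intro b hb
    rcases Finset.mem_insert.mp hb with h | h
    · exact h ▸ hj
    · exact hYent b h
  obtain ⟨e, he, hcon⟩ := S.ax8 i X (insert j Y) hX hall
  have hej : S.Con e {j} := S.ax2 e _ _ (by simp) hcon
  have heY : S.Con e Y := S.ax2 e _ _ (Finset.subset_insert j Y) hcon
  have heYa : S.ent e Y a := S.ax10 j e Y a hej hY ha
  have hie : S.Con i {e} := S.ax4 i X {e} hX (by simpa using he)
  have hiYa : S.ent i Y a := S.ax10 e i Y a hie heY heYa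
  exact S.ax6 i X Y a hX hYent hiYa
end

section
/- Let (A, Con, ⊢, Δ) be an information system with witnesses and x ⊆ A. Then the conjunction of the two conditions '(∀ finite F ⊆ x)(∃ i ∈ x) F ∈ Con(i)' and '(∀ a ∈ x)(∃ i ∈ x)(∃ finite X ⊆ x) X ∈ Con(i) ∧ (i,X) ⊢ a' is equivalent to the single condition: (∀ finite F ⊆ x)(∃ i ∈ x)(∃ finite X ⊆ x) X ∈ Con(i) ∧ (i,X) ⊢ F. -/
/-- Proposition 3.6: the two state conditions (finite consistency and derivability)
are together equivalent to the single condition (ST). -/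
theorem state_single_cond {A : Type*} (S : IWS A) (x : Set A) :
    ((∀ F : Finset A, ↑F ⊆ x → ∃ i ∈ x, S.Con i F) ∧
     (∀ a ∈ x, ∃ i ∈ x, ∃ X : Finset A, ↑X ⊆ x ∧ S.Con i X ∧ S.ent i X a)) ↔
    (∀ F : Finset A, ↑F ⊆ x →
      ∃ i ∈ x, ∃ X : Finset A, ↑X ⊆ x ∧ S.Con i X ∧ ∀ a ∈ F, S.ent i X a) := by
  classical
  constructor
  · rintro ⟨h1, h2⟩ F hF
    have key : ∀ a : A, ∃ p : A × Finset A, a ∈ x →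
        p.1 ∈ x ∧ ↑p.2 ⊆ x ∧ S.Con p.1 p.2 ∧ S.ent p.1 p.2 a := by
      intro a
      by_cases ha : a ∈ x
      · obtain ⟨i, hi, X, hX, hC, hE⟩ := h2 a ha
        exact ⟨(i, X), fun _ => ⟨hi, hX, hC, hE⟩⟩
      · exact ⟨(S.Δ, ∅), fun h => absurd h ha⟩
    choose p hp using key
    set wI : A → A := fun a => (p a).1 with hwI
    set wX : A → Finset A := fun a => (p a).2 with hwX
    set B : Finset A := F ∪ F.image wI ∪ F.biUnion wX with hB
    have hBx : ↑B ⊆ x := by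
      intro b hb
      simp only [hB, Finset.coe_union, Set.mem_union, Finset.mem_coe,
        Finset.mem_image, Finset.mem_biUnion] at hb
      rcases hb with (hb | ⟨a, ha, rfl⟩) | ⟨a, ha, hb⟩
      · exact hF hb
      · exact (hp a (hF ha)).1
      · exact (hp a (hF ha)).2.1 hb
    obtain ⟨j, hj, hjB⟩ := h1 B hBx
    refine ⟨j, hj, F.biUnion wX, ?_, ?_, ?_⟩
    · intro b hb
      exact hBx (Finset.mem_coe.mpr (Finset.mem_union_right _ (Finset.mem_coe.mp hb)))
    · exact S.ax2 j B _ (by intro b hb; simp only [hB, Finset.mem_union]; exact Or.inr hb) hjB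
    · intro a ha
      obtain ⟨hi, hX, hC, hE⟩ := hp a (hF ha)
      have hjia : S.Con j {wI a} := by
        apply S.ax2 j B _ _ hjB
        intro b hb
        simp only [Finset.mem_singleton] at hb
        subst hb
        simp only [hB, Finset.mem_union, Finset.mem_image]
        exact Or.inl (Or.inr ⟨a, ha, rfl⟩)
      have hE' : S.ent j (wX a) a := S.ax10 (wI a) j (wX a) a hjia hC hE
      have hsub : wX a ⊆ F.biUnion wX := Finset.subset_biUnion_of_mem wX ha
      have hCj1 : S.Con j (wX a) := S.ax9 (wI a) j hjia _ hC
      have hCj2 : S.Con j (F.biUnion wX) :=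
        S.ax2 j B _ (by intro b hb; simp only [hB, Finset.mem_union]; exact Or.inr hb) hjB
      exact S.ax5 j (wX a) (F.biUnion wX) a hCj1 hCj2 hsub hE'
  · intro h
    constructor
    · intro F hF
      obtain ⟨i, hi, X, hX, hC, hE⟩ := h F hF
      exact ⟨i, hi, S.ax4 i X F hC hE⟩
    · intro a ha
      obtain ⟨i, hi, X, hX, hC, hE⟩ := h {a} (by simpa using ha)
      exact ⟨i, hi, X, hX, hC, hE a (Finset.mem_singleton_self a)⟩
end

section
/- Let (A, Con, ⊢, Δ) be an information system with witnesses and z a state of A. Then the family { [X]_i : (i,X) ∈ Con, {i} ∪ X ⊆ z } is directed under inclusion and its union equals z. -/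
/-- For every state z, the family of all [X]_i with {i} ∪ X ⊆ z is directed
(under inclusion) and its union is z. -/
theorem state_directed_union {A : Type*} (S : IWS A) (z : Set A) (hz : S.state z) :
    ({w : Set A | ∃ i, ∃ X : Finset A, S.Con i X ∧ i ∈ z ∧ ↑X ⊆ z ∧
        w = {a | S.ent i X a}}).Nonempty ∧
    DirectedOn (· ⊆ ·)
      {w : Set A | ∃ i, ∃ X : Finset A, S.Con i X ∧ i ∈ z ∧ ↑X ⊆ z ∧
        w = {a | S.ent i X a}} ∧
    ⋃₀ {w : Set A | ∃ i, ∃ X : Finset A, S.Con i X ∧ i ∈ z ∧ ↑X ⊆ z ∧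
        w = {a | S.ent i X a}} = z := by
  classical
  obtain ⟨hcons, hclos, hder⟩ := hz
  refine ⟨?_, ?_, ?_⟩
  · obtain ⟨i, hi, hci⟩ := hcons ∅ (by simp)
    exact ⟨{a | S.ent i ∅ a}, i, ∅, hci, hi, by simp, rfl⟩
  · rintro w ⟨i, X, hciX, hiz, hXz, rfl⟩ w' ⟨j, Y, hcjY, hjz, hYz, rfl⟩
    have hF : ↑({i, j} ∪ X ∪ Y : Finset A) ⊆ z := by
      intro a ha
      simp only [Finset.coe_union, Finset.coe_insert, Finset.coe_singleton,
        Set.mem_union, Set.mem_insert_iff, Set.mem_singleton_iff] at ha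
      rcases ha with ((rfl | rfl) | ha) | ha
      · exact hiz
      · exact hjz
      · exact hXz ha
      · exact hYz ha
    obtain ⟨k, hkz, hck⟩ := hcons _ hF
    have hki : S.Con k {i} := S.ax2 _ _ _ (by intro a ha; simp_all) hck
    have hkj : S.Con k {j} := S.ax2 _ _ _ (by intro a ha; simp_all) hck
    have hkX : S.Con k X := S.ax2 _ _ _ (by intro a ha; simp [ha]) hck
    have hkY : S.Con k Y := S.ax2 _ _ _ (by intro a ha; simp [ha]) hck
    have hkXY : S.Con k (X ∪ Y) := S.ax2 _ _ _ (by intro a ha; simp at ha; simp [ha]) hck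
    refine ⟨{a | S.ent k (X ∪ Y) a}, ⟨k, X ∪ Y, hkXY, hkz, ?_, rfl⟩, ?_, ?_⟩
    · intro a ha
      simp only [Finset.coe_union, Set.mem_union] at ha
      rcases ha with ha | ha
      · exact hXz ha
      · exact hYz ha
    · intro a ha
      exact S.ax5 k X (X ∪ Y) a hkX hkXY Finset.subset_union_left
        (S.ax10 i k X a hki hciX ha)
    · intro a ha
      exact S.ax5 k Y (X ∪ Y) a hkY hkXY Finset.subset_union_right
        (S.ax10 j k Y a hkj hcjY ha)
  · ext a
    simp only [Set.mem_sUnion, Set.mem_setOf_eq]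
    constructor
    · rintro ⟨w, ⟨i, X, hciX, hiz, hXz, rfl⟩, ha⟩
      exact hclos i hiz X hXz a hciX ha
    · intro ha
      obtain ⟨i, hiz, X, hXz, hciX, hent⟩ := hder a ha
      exact ⟨{b | S.ent i X b}, ⟨i, X, hciX, hiz, hXz, rfl⟩, hent⟩
end

section
/- Let (A, Con, ⊢, Δ) be an information system with witnesses and x, y states of A (ordered by inclusion). Then x ≪ y (x approximates y in the dcpo of states) if and only if there exists (i,V) ∈ Con with {i} ∪ V ⊆ y and (i,V) ⊢ x, i.e. (i,V) ⊢ a for all a ∈ x. -/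
/-- The set of tokens entailed by a consistent pair `(i, V)` is a state. -/
lemma cl_state {A : Type*} (S : IWS A) {i : A} {V : Finset A} (h : S.Con i V) :
    S.state {a | S.ent i V a} := by
  refine ⟨?_, ?_, ?_⟩
  · intro F hF
    obtain ⟨e, he, heF⟩ := S.ax8 i V F h (fun a ha => hF ha)
    exact ⟨e, he, heF⟩
  · intro j hj X hX a hC hE
    have hij : S.Con i {j} := S.ax4 i V {j} h (by simpa using hj)
    have hiX : S.ent i X a := S.ax10 j i X a hij hC hE
    exact S.ax6 i V X a h (fun b hb => hX hb) hiX
  · intro a ha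
    obtain ⟨Z, hZcon, hZ, hZa⟩ := S.ax7 i V a ha
    obtain ⟨e, he, heZ⟩ := S.ax8 i V Z h hZ
    have hie : S.Con i {e} := S.ax4 i V {e} h (by simpa using he)
    have : S.ent e Z a := S.ax11 e i Z a hie heZ hZa
    exact ⟨e, he, Z, fun z hz => hZ z hz, heZ, this⟩

/-- A directed union of states is a state. -/
lemma union_state {A : Type*} (S : IWS A) (D : Set {x : Set A // S.state x})
    (hD : DirectedOn (· ≤ ·) D) (hne : D.Nonempty) :
    S.state (⋃ u ∈ D, u.1) := by
  classical
  have hD' : DirectedOn (fun u v : {x : Set A // S.state x} => u.1 ⊆ v.1) D := hD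
  refine ⟨?_, ?_, ?_⟩
  · intro F hF
    obtain ⟨u, hu, hFu⟩ :=
      DirectedOn.exists_mem_subset_of_finset_subset_biUnion (f := Subtype.val) hne hD' hF
    obtain ⟨k, hk, hkF⟩ := u.2.1 F hFu
    exact ⟨k, Set.mem_biUnion hu hk, hkF⟩
  · intro j hj X hX a hC hE
    obtain ⟨u, hu, hFu⟩ :=
      DirectedOn.exists_mem_subset_of_finset_subset_biUnion (f := Subtype.val) hne hD'
        (s := insert j X)
        (by
          intro b hb
          rcases Finset.mem_insert.1 (by exact_mod_cast hb) with rfl | hbX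
          · exact hj
          · exact hX (by exact_mod_cast hbX))
    have hju : j ∈ u.1 := hFu (by simp)
    have hXu : ↑X ⊆ u.1 := fun b hb => hFu (by simp [Finset.mem_insert]; right; exact_mod_cast hb)
    exact Set.mem_biUnion hu (u.2.2.1 j hju X hXu a hC hE)
  · intro a ha
    obtain ⟨u, hu, hau⟩ := Set.mem_iUnion₂.1 ha
    obtain ⟨k, hk, X, hXu, hCon, hent⟩ := u.2.2.2 a hau
    exact ⟨k, Set.mem_biUnion hu hk, X, fun b hb => Set.mem_biUnion hu (hXu hb), hCon, hent⟩

/-- Proposition 3.7: characterisation of the approximation relation on states. -/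
theorem approx_char {A : Type*} (S : IWS A) (x y : {x : Set A // S.state x}) :
    wayBelow x y ↔
      ∃ i, ∃ V : Finset A, S.Con i V ∧ i ∈ y.1 ∧ ↑V ⊆ y.1 ∧
        ∀ a ∈ x.1, S.ent i V a := by
  classical
  constructor
  · -- way below implies existence of a covering pair
    intro hwb
    -- the directed family of states generated by pairs inside y
    set D : Set {x : Set A // S.state x} :=
      { u | ∃ k, ∃ F : Finset A, k ∈ y.1 ∧ ↑F ⊆ y.1 ∧ S.Con k F ∧
          u.1 = {a | S.ent k F a} } with hDdef
    have hmem : ∀ k (F : Finset A), k ∈ y.1 → ↑F ⊆ y.1 → (h : S.Con k F) →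
        (⟨{a | S.ent k F a}, cl_state S h⟩ : {x : Set A // S.state x}) ∈ D := by
      intro k F hk hF h
      exact ⟨k, F, hk, hF, h, rfl⟩
    have hne : D.Nonempty := by
      obtain ⟨k, hk, hC⟩ := y.2.1 ∅ (by simp)
      exact ⟨_, hmem k ∅ hk (by simp) hC⟩
    have hdir : DirectedOn (· ≤ ·) D := by
      rintro u₁ ⟨k₁, F₁, hk₁, hF₁, hC₁, hu₁⟩ u₂ ⟨k₂, F₂, hk₂, hF₂, hC₂, hu₂⟩
      -- find a common witness for everything
      obtain ⟨k, hk, hC⟩ := y.2.1 (insert k₁ (insert k₂ (F₁ ∪ F₂)))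
        (by
          intro b hb
          rcases Finset.mem_insert.1 (by exact_mod_cast hb) with rfl | hb
          · exact hk₁
          rcases Finset.mem_insert.1 hb with rfl | hb
          · exact hk₂
          rcases Finset.mem_union.1 hb with hb | hb
          · exact hF₁ hb
          · exact hF₂ hb)
      have hCU : S.Con k (F₁ ∪ F₂) :=
        S.ax2 k _ _ (by intro b hb; simp [Finset.mem_insert, hb]) hC
      have key : ∀ k' (F' : Finset A), S.Con k' F' → k' ∈ insert k₁ (insert k₂ (F₁ ∪ F₂)) →
          F' ⊆ F₁ ∪ F₂ → {a | S.ent k' F' a} ⊆ {a | S.ent k (F₁ ∪ F₂) a} := by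
        intro k' F' hC' hk' hF' a ha
        have hkk' : S.Con k {k'} :=
          S.ax2 k _ _ (by intro b hb; simp only [Finset.mem_singleton] at hb; subst hb; exact hk') hC
        have h1 : S.ent k F' a := S.ax10 k' k F' a hkk' hC' ha
        have hkF' : S.Con k F' := S.ax2 k _ _ (hF'.trans (by intro b hb; simp [Finset.mem_insert, hb])) hC
        exact S.ax5 k F' (F₁ ∪ F₂) a hkF' hCU hF' h1
      refine ⟨⟨{a | S.ent k (F₁ ∪ F₂) a}, cl_state S hCU⟩,
        hmem k (F₁ ∪ F₂) hk (fun b hb => by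
          rcases Finset.mem_union.1 (by exact_mod_cast hb) with hb | hb
          · exact hF₁ hb
          · exact hF₂ hb) hCU, ?_, ?_⟩
      · show u₁.1 ⊆ _
        rw [hu₁]
        exact key k₁ F₁ hC₁ (by simp) Finset.subset_union_left
      · show u₂.1 ⊆ _
        rw [hu₂]
        exact key k₂ F₂ hC₂ (by simp) Finset.subset_union_right
    have hlub : IsLUB D y := by
      constructor
      · rintro u ⟨k, F, hk, hF, hC, hu⟩
        show u.1 ⊆ y.1
        rw [hu]
        intro a ha
        exact y.2.2.1 k hk F hF a hC ha
      · intro b hb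
        show y.1 ⊆ b.1
        intro a ha
        obtain ⟨k, hk, X, hX, hC, hE⟩ := y.2.2.2 a ha
        have := hb (hmem k X hk hX hC)
        exact this hE
    obtain ⟨u, hu, hxu⟩ := hwb D hdir hne y hlub le_rfl
    obtain ⟨k, F, hk, hF, hC, huF⟩ := hu
    refine ⟨k, F, hC, hk, hF, ?_⟩
    intro a ha
    have : a ∈ u.1 := hxu ha
    rw [huF] at this
    exact this
  · rintro ⟨i, V, hC, hiy, hVy, hent⟩
    intro D hdir hne l hlub hyl
    have hU : S.state (⋃ u ∈ D, u.1) := union_state S D hdir hne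
    have hlU : l ≤ (⟨_, hU⟩ : {x : Set A // S.state x}) :=
      hlub.2 (fun u hu => show u.1 ⊆ _ from fun a ha => Set.mem_biUnion hu ha)
    have hyU : y.1 ⊆ ⋃ u ∈ D, u.1 := le_trans hyl hlU
    obtain ⟨u, hu, hsub⟩ :=
      DirectedOn.exists_mem_subset_of_finset_subset_biUnion (f := Subtype.val) hne
        (show DirectedOn (fun u v : {x : Set A // S.state x} => u.1 ⊆ v.1) D from hdir)
        (s := insert i V)
        (by
          intro b hb
          rcases Finset.mem_insert.1 (by exact_mod_cast hb) with rfl | hb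
          · exact hyU hiy
          · exact hyU (hVy (by exact_mod_cast hb)))
    refine ⟨u, hu, ?_⟩
    show x.1 ⊆ u.1
    intro a ha
    have hiu : i ∈ u.1 := hsub (by simp)
    have hVu : ↑V ⊆ u.1 := fun b hb =>
      hsub (by simp only [Finset.coe_insert, Set.mem_insert_iff]; right; exact hb)
    exact u.2.2.1 i hiu V hVu a hC (hent a ha)
end

section
/- Let (A, Con, ⊢, Δ) be an information system with witnesses. Then the poset of states (|A|, ⊆) with least element [∅]_Δ is an L-domain with basis { [X]_i : (i,X) ∈ Con }. -/
namespace IWSAux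

variable {A : Type*} (S : IWS A)

lemma conEmpty (i : A) : S.Con i ∅ :=
  S.ax2 i {i} ∅ (Finset.empty_subset _) (S.ax1 i)

/-- Witness transfer inside a big state `z`. -/
lemma transfer {z : Set A} (hz : S.state z) {i m : A} (hi : i ∈ z) (hm : m ∈ z)
    {X : Finset A} (hmX : S.Con m X) (hiX : S.Con i X) {a : A} (h : S.ent i X a) :
    S.ent m X a := by
  classical
  obtain ⟨p, _, hcon⟩ := hz.1 {i, m} (by
    intro b hb
    simp only [Finset.coe_insert, Finset.coe_singleton, Set.mem_insert_iff,
      Set.mem_singleton_iff] at hb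
    rcases hb with rfl | rfl
    · exact hi
    · exact hm)
  have hpi : S.Con p {i} := S.ax2 p {i, m} {i} (by simp) hcon
  have hpm : S.Con p {m} := S.ax2 p {i, m} {m} (by simp) hcon
  exact S.ax11 m p X a hpm hmX (S.ax10 i p X a hpi hiX h)

/-- Joint entailment: finitely many elements, each entailed from a pair with
witness in `z` and context in `P ⊆ z`, are jointly entailed from one such pair. -/
lemma jointEnt' {z : Set A} (hz : S.state z) {P : Set A} (hP : P ⊆ z) (F : Finset A)
    (hF : ∀ a ∈ F, ∃ i ∈ z, ∃ X : Finset A, ↑X ⊆ P ∧ S.Con i X ∧ S.ent i X a) :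
    ∃ k ∈ z, ∃ G : Finset A, ↑G ⊆ P ∧ S.Con k G ∧ ∀ a ∈ F, S.ent k G a := by
  classical
  choose! w hw X hX hc he using hF
  set H : Finset A := F.image w ∪ F.biUnion X with hH
  have hHz : ↑H ⊆ z := by
    intro b hb
    rw [Finset.mem_coe, hH, Finset.mem_union] at hb
    rcases hb with hb | hb
    · obtain ⟨a, ha, rfl⟩ := Finset.mem_image.mp hb
      exact hw a ha
    · obtain ⟨a, ha, hbX⟩ := Finset.mem_biUnion.mp hb
      exact hP (hX a ha hbX)
  obtain ⟨k, hk, hkH⟩ := hz.1 H hHz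
  have hGH : F.biUnion X ⊆ H := Finset.subset_union_right
  have hkG : S.Con k (F.biUnion X) := S.ax2 k H _ hGH hkH
  refine ⟨k, hk, F.biUnion X, ?_, hkG, ?_⟩
  · intro b hb
    rw [Finset.mem_coe, Finset.mem_biUnion] at hb
    obtain ⟨a, ha, hbX⟩ := hb
    exact hX a ha hbX
  · intro a ha
    have hki : S.Con k {w a} := S.ax2 k H {w a} (by
        intro b hb
        rw [Finset.mem_singleton] at hb
        subst hb
        exact Finset.mem_union_left _ (Finset.mem_image_of_mem w ha)) hkH
    have h1 : S.ent k (X a) a := S.ax10 (w a) k (X a) a hki (hc a ha) (he a ha)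
    have hXaG : X a ⊆ F.biUnion X := Finset.subset_biUnion_of_mem X ha
    have hkXa : S.Con k (X a) := S.ax2 k H (X a) (hXaG.trans hGH) hkH
    exact S.ax5 k (X a) (F.biUnion X) a hkXa hkG hXaG h1

/-- Principal states: `[X]_i` is a state whenever `Con i X`. -/
lemma prinState {i : A} {X : Finset A} (h : S.Con i X) :
    S.state {a | S.ent i X a} := by
  classical
  refine ⟨?_, ?_, ?_⟩
  · intro F hF
    obtain ⟨e, he, hce⟩ := S.ax8 i X F h (fun a ha => hF ha)
    exact ⟨e, he, hce⟩
  · intro j hj Y hY a hCon hEnt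
    obtain ⟨e, heiX, heC⟩ := S.ax8 i X (insert j Y) h (by
      intro b hb
      rcases Finset.mem_insert.mp hb with rfl | hb
      · exact hj
      · exact hY hb)
    have heCj : S.Con e {j} := S.ax2 e (insert j Y) {j} (by simp) heC
    have heCY : S.Con e Y := S.ax2 e (insert j Y) Y (Finset.subset_insert _ _) heC
    have h1 : S.ent e Y a := S.ax10 j e Y a heCj hCon hEnt
    have hie : S.Con i {e} := S.ax4 i X {e} h (by simpa using heiX)
    have h2 : S.ent i Y a := S.ax10 e i Y a hie heCY h1
    exact S.ax6 i X Y a h (fun b hb => hY hb) h2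
  · intro a ha
    obtain ⟨Z, hZC, hZe, hZa⟩ := S.ax7 i X a ha
    obtain ⟨e, hee, heC⟩ := S.ax8 i X (insert a Z) h (by
      intro b hb
      rcases Finset.mem_insert.mp hb with rfl | hb
      · exact ha
      · exact hZe b hb)
    have heZ : S.Con e Z := S.ax2 e (insert a Z) Z (Finset.subset_insert _ _) heC
    have hie : S.Con i {e} := S.ax4 i X {e} h (by simpa using hee)
    exact ⟨e, hee, Z, fun b hb => hZe b hb, heZ, S.ax11 e i Z a hie heZ hZa⟩

lemma prin_subset {x : Set A} (hx : S.state x) {i : A} {X : Finset A}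
    (hi : i ∈ x) (hX : ↑X ⊆ x) (h : S.Con i X) : {a | S.ent i X a} ⊆ x :=
  fun _ ha => hx.2.1 i hi X hX _ h ha

lemma prin_mono {i k : A} {X Z : Finset A} (hki : S.Con k {i}) (hiX : S.Con i X)
    (hkZ : S.Con k Z) (hXZ : X ⊆ Z) :
    {a | S.ent i X a} ⊆ {a | S.ent k Z a} := by
  intro a ha
  have hkX : S.Con k X := S.ax9 i k hki X hiX
  exact S.ax5 k X Z a hkX hkZ hXZ (S.ax10 i k X a hki hiX ha)

lemma state_nonempty {x : Set A} (hx : S.state x) : ∃ i, i ∈ x := by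
  obtain ⟨i, hi, _⟩ := hx.1 ∅ (by simp)
  exact ⟨i, hi⟩

lemma deltaMem {x : Set A} (hx : S.state x) : S.Δ ∈ x := by
  obtain ⟨i, hi⟩ := state_nonempty S hx
  exact hx.2.1 i hi ∅ (by simp) S.Δ (conEmpty S i) (S.ax3 i)

lemma finsetSubsetUnion {D : Set {x : Set A // S.state x}}
    (hdir : DirectedOn (· ≤ ·) D) (hne : D.Nonempty) (F : Finset A)
    (hF : ∀ a ∈ F, ∃ u ∈ D, a ∈ u.1) : ∃ u ∈ D, ↑F ⊆ u.1 := by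
  classical
  induction F using Finset.induction with
  | empty =>
    obtain ⟨u, hu⟩ := hne
    exact ⟨u, hu, by simp⟩
  | @insert a F ha ih =>
    obtain ⟨u, hu, huF⟩ := ih (fun b hb => hF b (Finset.mem_insert_of_mem hb))
    obtain ⟨v, hv, hav⟩ := hF a (Finset.mem_insert_self a F)
    obtain ⟨w, hw, huw, hvw⟩ := hdir u hu v hv
    refine ⟨w, hw, ?_⟩
    intro b hb
    rcases Finset.mem_insert.mp hb with rfl | hb
    · exact hvw hav
    · exact huw (huF hb)

lemma unionState {D : Set {x : Set A // S.state x}}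
    (hdir : DirectedOn (· ≤ ·) D) (hne : D.Nonempty) :
    S.state {a | ∃ u ∈ D, a ∈ u.1} := by
  classical
  refine ⟨?_, ?_, ?_⟩
  · intro F hF
    obtain ⟨u, hu, hFu⟩ := finsetSubsetUnion S hdir hne F (fun a ha => hF ha)
    obtain ⟨i, hi, hc⟩ := u.2.1 F hFu
    exact ⟨i, ⟨u, hu, hi⟩, hc⟩
  · intro i hi X hX a hCon hEnt
    obtain ⟨u, hu, hsub⟩ := finsetSubsetUnion S hdir hne (insert i X) (by
      intro b hb
      rcases Finset.mem_insert.mp hb with rfl | hb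
      · exact hi
      · exact hX hb)
    have hiu : i ∈ u.1 := hsub (Finset.mem_insert_self i X)
    have hXu : ↑X ⊆ u.1 := fun b hb => hsub (Finset.mem_insert_of_mem hb)
    exact ⟨u, hu, u.2.2.1 i hiu X hXu a hCon hEnt⟩
  · intro a ha
    obtain ⟨u, hu, hau⟩ := ha
    obtain ⟨i, hi, X, hX, hc, he⟩ := u.2.2.2 a hau
    exact ⟨i, ⟨u, hu, hi⟩, X, fun b hb => ⟨u, hu, hX hb⟩, hc, he⟩

lemma unionIsLUB {D : Set {x : Set A // S.state x}}
    (hdir : DirectedOn (· ≤ ·) D) (hne : D.Nonempty) :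
    IsLUB D ⟨{a | ∃ u ∈ D, a ∈ u.1}, unionState S hdir hne⟩ := by
  constructor
  · intro u hu
    show u.1 ⊆ {a | ∃ u ∈ D, a ∈ u.1}
    exact fun a ha => ⟨u, hu, ha⟩
  · intro l hl
    show {a | ∃ u ∈ D, a ∈ u.1} ⊆ l.1
    rintro a ⟨u, hu, hau⟩
    exact (hl hu : u.1 ⊆ l.1) hau

/-- The least upper bound of `x` and `y` below `z`. -/
lemma joinState {x y z : Set A} (hx : S.state x) (hy : S.state y) (hz : S.state z)
    (hxz : x ⊆ z) (hyz : y ⊆ z) :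
    S.state {a | ∃ i ∈ z, ∃ X : Finset A, ↑X ⊆ x ∪ y ∧ S.Con i X ∧ S.ent i X a} := by
  classical
  have hPz : x ∪ y ⊆ z := Set.union_subset hxz hyz
  refine ⟨?_, ?_, ?_⟩
  · intro F hF
    obtain ⟨k, hk, G, hG, hkG, hke⟩ := jointEnt' S hz hPz F (fun a ha => hF ha)
    obtain ⟨e, hek, heF⟩ := S.ax8 k G F hkG hke
    exact ⟨e, ⟨k, hk, G, hG, hkG, hek⟩, heF⟩
  · intro j hj W hW a hCon hEnt
    obtain ⟨k, hk, G, hG, hkG, hke⟩ := jointEnt' S hz hPz (insert j W) (by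
      intro b hb
      rcases Finset.mem_insert.mp hb with rfl | hb
      · exact hj
      · exact hW hb)
    have hkj : S.Con k {j} := S.ax4 k G {j} hkG (by
      intro b hb
      rw [Finset.mem_singleton] at hb
      rw [hb]
      exact hke j (Finset.mem_insert_self _ _))
    have h1 : S.ent k W a := S.ax10 j k W a hkj hCon hEnt
    have h2 : S.ent k G a :=
      S.ax6 k G W a hkG (fun b hb => hke b (Finset.mem_insert_of_mem hb)) h1
    exact ⟨k, hk, G, hG, hkG, h2⟩
  · rintro a ⟨i, hi, X, hX, hCon, hEnt⟩
    obtain ⟨Z, hZC, hZe, hZa⟩ := S.ax7 i X a hEnt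
    obtain ⟨e, hee, heC⟩ := S.ax8 i X (insert a Z) hCon (by
      intro b hb
      rcases Finset.mem_insert.mp hb with rfl | hb
      · exact hEnt
      · exact hZe b hb)
    have heZ : S.Con e Z := S.ax2 e (insert a Z) Z (Finset.subset_insert _ _) heC
    have hie : S.Con i {e} := S.ax4 i X {e} hCon (by simpa using hee)
    refine ⟨e, ⟨i, hi, X, hX, hCon, hee⟩, Z, ?_, heZ, S.ax11 e i Z a hie heZ hZa⟩
    intro b hb
    exact ⟨i, hi, X, hX, hCon, hZe b hb⟩

lemma joinLeast {x y z v : Set A} (hz : S.state z) (hv : S.state v)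
    (hxv : x ⊆ v) (hyv : y ⊆ v) (hvz : v ⊆ z) :
    {a | ∃ i ∈ z, ∃ X : Finset A, ↑X ⊆ x ∪ y ∧ S.Con i X ∧ S.ent i X a} ⊆ v := by
  rintro a ⟨i, hi, X, hX, hCon, hEnt⟩
  have hXv : ↑X ⊆ v := hX.trans (Set.union_subset hxv hyv)
  obtain ⟨m, hm, hmX⟩ := hv.1 X hXv
  have hma : S.ent m X a := transfer S hz hi (hvz hm) hmX hCon hEnt
  exact hv.2.1 m hm X hXv a hmX hma

end IWSAux

/-- Theorem 3.8: the poset of states is an L-domain with least element [∅]_Δ and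
basis the principal states [X]_i. -/
theorem states_LDomain {A : Type*} (S : IWS A) :
    (∀ D : Set {x : Set A // S.state x},
      DirectedOn (· ≤ ·) D → D.Nonempty → ∃ l, IsLUB D l) ∧
    (∃ bot : {x : Set A // S.state x},
      bot.1 = {a | S.ent S.Δ ∅ a} ∧ ∀ x, bot ≤ x) ∧
    (∀ x : {x : Set A // S.state x},
      ∃ D ⊆ {u : {x : Set A // S.state x} |
          (∃ i, ∃ X : Finset A, S.Con i X ∧ u.1 = {a | S.ent i X a}) ∧ wayBelow u x},
        D.Nonempty ∧ DirectedOn (· ≤ ·) D ∧ IsLUB D x) ∧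
    (∀ x y z : {x : Set A // S.state x}, x ≤ z → y ≤ z →
      ∃ w, IsLeast {v | v ≤ z ∧ x ≤ v ∧ y ≤ v} w) := by
  classical
  refine ⟨?_, ?_, ?_, ?_⟩
  -- Part 1: directed sups exist (unions)
  · intro D hdir hne
    exact ⟨_, IWSAux.unionIsLUB S hdir hne⟩
  -- Part 2: least element
  · refine ⟨⟨{a | S.ent S.Δ ∅ a}, IWSAux.prinState S (S.entCon _ _ _ (S.ax3 S.Δ))⟩, rfl, ?_⟩
    intro x
    show {a | S.ent S.Δ ∅ a} ⊆ x.1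
    intro a ha
    exact x.2.2.1 S.Δ (IWSAux.deltaMem S x.2) ∅ (by simp) a (S.entCon _ _ _ ha) ha
  -- Part 3: basis of principal states
  · intro x
    refine ⟨{u : {x : Set A // S.state x} |
        ∃ i ∈ x.1, ∃ X : Finset A, ↑X ⊆ x.1 ∧ S.Con i X ∧ u.1 = {a | S.ent i X a}},
      ?_, ?_, ?_, ?_⟩
    -- D is contained in the basis & way-below set
    · rintro u ⟨i, hi, X, hX, hc, hu⟩
      refine ⟨⟨i, X, hc, hu⟩, ?_⟩
      intro T hTdir hTne l hl hxl
      have hlub := IWSAux.unionIsLUB S hTdir hTne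
      have hleq : l = ⟨{a | ∃ u ∈ T, a ∈ u.1}, IWSAux.unionState S hTdir hTne⟩ := hl.unique hlub
      have hxU : x.1 ⊆ {a | ∃ u ∈ T, a ∈ u.1} := by
        have h1 : x ≤ l := hxl
        rw [hleq] at h1
        exact h1
      obtain ⟨w, hw, hsub⟩ := IWSAux.finsetSubsetUnion S hTdir hTne (insert i X) (by
        intro b hb
        rcases Finset.mem_insert.mp hb with rfl | hb
        · exact hxU hi
        · exact hxU (hX hb))
      refine ⟨w, hw, ?_⟩
      show u.1 ⊆ w.1
      rw [hu]
      exact IWSAux.prin_subset S w.2 (hsub (Finset.mem_insert_self i X))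
        (fun b hb => hsub (Finset.mem_insert_of_mem hb)) hc
    -- D nonempty
    · obtain ⟨i0, hi0⟩ := IWSAux.state_nonempty S x.2
      exact ⟨⟨{a | S.ent i0 ∅ a}, IWSAux.prinState S (IWSAux.conEmpty S i0)⟩,
        ⟨i0, hi0, ∅, by simp, IWSAux.conEmpty S i0, rfl⟩⟩
    -- D directed
    · rintro u ⟨i, hi, X, hX, hcX, hu⟩ v ⟨j, hj, Y, hY, hcY, hv⟩
      obtain ⟨k, hk, hkH⟩ := x.2.1 (insert i (insert j (X ∪ Y))) (by
        intro b hb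
        rcases Finset.mem_insert.mp hb with rfl | hb
        · exact hi
        rcases Finset.mem_insert.mp hb with rfl | hb
        · exact hj
        rcases Finset.mem_union.mp hb with hb | hb
        · exact hX hb
        · exact hY hb)
      have hXYsub : X ∪ Y ⊆ insert i (insert j (X ∪ Y)) := by
        intro b hb
        exact Finset.mem_insert_of_mem (Finset.mem_insert_of_mem hb)
      have hkXY : S.Con k (X ∪ Y) := S.ax2 _ _ _ hXYsub hkH
      have hki : S.Con k {i} := S.ax2 _ _ _ (by simp) hkH
      have hkj : S.Con k {j} := S.ax2 _ _ _ (by simp) hkH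
      refine ⟨⟨{a | S.ent k (X ∪ Y) a}, IWSAux.prinState S hkXY⟩,
        ⟨k, hk, X ∪ Y, ?_, hkXY, rfl⟩, ?_, ?_⟩
      · intro b hb
        rcases Finset.mem_union.mp hb with hb | hb
        · exact hX hb
        · exact hY hb
      · show u.1 ⊆ {a | S.ent k (X ∪ Y) a}
        rw [hu]
        exact IWSAux.prin_mono S hki hcX hkXY Finset.subset_union_left
      · show v.1 ⊆ {a | S.ent k (X ∪ Y) a}
        rw [hv]
        exact IWSAux.prin_mono S hkj hcY hkXY Finset.subset_union_right
    -- x is the lub of D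
    · constructor
      · rintro u ⟨i, hi, X, hX, hc, hu⟩
        show u.1 ⊆ x.1
        rw [hu]
        exact IWSAux.prin_subset S x.2 hi hX hc
      · intro l hl
        show x.1 ⊆ l.1
        intro a ha
        obtain ⟨i, hi, X, hX, hc, he⟩ := x.2.2.2 a ha
        have hu : (⟨{b | S.ent i X b}, IWSAux.prinState S hc⟩ : {x : Set A // S.state x}) ∈
            {u : {x : Set A // S.state x} |
              ∃ i ∈ x.1, ∃ X : Finset A, ↑X ⊆ x.1 ∧ S.Con i X ∧ u.1 = {a | S.ent i X a}} :=
          ⟨i, hi, X, hX, hc, rfl⟩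
        exact (hl hu : {b | S.ent i X b} ⊆ l.1) he
  -- Part 4: L-property
  · intro x y z hxz hyz
    have hxz' : x.1 ⊆ z.1 := hxz
    have hyz' : y.1 ⊆ z.1 := hyz
    have hW := IWSAux.joinState S x.2 y.2 z.2 hxz' hyz'
    refine ⟨⟨_, hW⟩, ⟨?_, ?_, ?_⟩, ?_⟩
    · show {a | ∃ i ∈ z.1, ∃ X : Finset A, ↑X ⊆ x.1 ∪ y.1 ∧ S.Con i X ∧ S.ent i X a} ⊆ z.1
      rintro a ⟨i, hi, X, hX, hc, he⟩
      exact z.2.2.1 i hi X (hX.trans (Set.union_subset hxz' hyz')) a hc he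
    · show x.1 ⊆ {a | ∃ i ∈ z.1, ∃ X : Finset A, ↑X ⊆ x.1 ∪ y.1 ∧ S.Con i X ∧ S.ent i X a}
      intro a ha
      obtain ⟨i, hi, X, hX, hc, he⟩ := x.2.2.2 a ha
      exact ⟨i, hxz' hi, X, fun b hb => Or.inl (hX hb), hc, he⟩
    · show y.1 ⊆ {a | ∃ i ∈ z.1, ∃ X : Finset A, ↑X ⊆ x.1 ∪ y.1 ∧ S.Con i X ∧ S.ent i X a}
      intro a ha
      obtain ⟨i, hi, X, hX, hc, he⟩ := y.2.2.2 a ha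
      exact ⟨i, hyz' hi, X, fun b hb => Or.inr (hX hb), hc, he⟩
    · rintro v ⟨hvz, hxv, hyv⟩
      show {a | ∃ i ∈ z.1, ∃ X : Finset A, ↑X ⊆ x.1 ∪ y.1 ∧ S.Con i X ∧ S.ent i X a} ⊆ v.1
      exact IWSAux.joinLeast S z.2 v.2 (hxv : x.1 ⊆ v.1) (hyv : y.1 ⊆ v.1) (hvz : v.1 ⊆ z.1)
end

section
/- Let (A, Con, ⊢, Δ) be an information system with witnesses and x, y, z states with x ⊆ z and y ⊆ z. Then the set ⋃{ [Z]_k : (k,Z) ∈ Con, k ∈ z, Z is a finite subset of x ∪ y } is the least upper bound of x and y within the principal ideal ↓z of the poset of states ordered by inclusion. -/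
section AuxLemmas

variable {A : Type*} (S : IWS A)

lemma IWS.conSingleton_of_ent {k : A} {Z : Finset A} {e : A} (hkZ : S.Con k Z)
    (he : S.ent k Z e) : S.Con k {e} :=
  S.ax4 k Z {e} hkZ (by simpa using he)

/-- Closure of the principal state `[Z]_k` under entailment with internal witness. -/
lemma IWS.principal_closed {k : A} {Z : Finset A} (hkZ : S.Con k Z)
    {i : A} (hi : S.ent k Z i) {X : Finset A} (hX : ∀ b ∈ X, S.ent k Z b)
    {a : A} (hiX : S.Con i X) (ha : S.ent i X a) : S.ent k Z a := by
  obtain ⟨e, hke, hei⟩ := S.ax8 k Z {i} hkZ (by simpa using hi)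
  have heX : S.ent e X a := S.ax10 i e X a hei hiX ha
  have hke1 : S.Con k {e} := S.conSingleton_of_ent hkZ hke
  have heXc : S.Con e X := S.ax9 i e hei X hiX
  have hkXa : S.ent k X a := S.ax10 e k X a hke1 heXc heX
  exact S.ax6 k Z X a hkZ hX hkXa

/-- Derivability inside the principal state `[Z]_k`. -/
lemma IWS.principal_deriv {k : A} {Z : Finset A} (hkZ : S.Con k Z)
    {a : A} (ha : S.ent k Z a) :
    ∃ e Z', S.ent k Z e ∧ (∀ c ∈ Z', S.ent k Z c) ∧ S.Con e Z' ∧ S.ent e Z' a := by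
  obtain ⟨Z', hZ'c, hZ'e, hZ'a⟩ := S.ax7 k Z a ha
  obtain ⟨e, hke, heZ'⟩ := S.ax8 k Z Z' hkZ hZ'e
  exact ⟨e, Z', hke, hZ'e, heZ',
    S.ax11 e k Z' a (S.conSingleton_of_ent hkZ hke) heZ' hZ'a⟩

/-- Finitely many elements of the union of principal states over `z` lie in a
common principal state. -/
lemma IWS.merge {x y z : Set A} (hz : S.state z) (hxz : x ⊆ z) (hyz : y ⊆ z)
    (F : Finset A)
    (hF : ∀ b ∈ F, ∃ k, ∃ Z : Finset A, S.Con k Z ∧ k ∈ z ∧ ↑Z ⊆ x ∪ y ∧ S.ent k Z b) :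
    ∃ m ∈ z, ∃ W : Finset A, ↑W ⊆ x ∪ y ∧ S.Con m W ∧ ∀ b ∈ F, S.ent m W b := by
  classical
  choose kf Zf hCon hkz hZxy hent using hF
  set W : Finset A := F.attach.biUnion (fun b => Zf b.1 b.2) with hW
  set K : Finset A := F.attach.image (fun b => kf b.1 b.2) with hK
  have hWxy : ↑W ⊆ x ∪ y := by
    intro c hc
    simp only [hW, Finset.coe_biUnion, Finset.mem_coe, Finset.mem_attach, Set.iUnion_true,
      Set.mem_iUnion] at hc
    obtain ⟨b, hcb⟩ := hc
    exact hZxy b.1 b.2 hcb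
  have hGz : ↑(W ∪ K) ⊆ z := by
    intro c hc
    simp only [Finset.coe_union, Set.mem_union, Finset.mem_coe, Finset.mem_union] at hc
    rcases hc with hc | hc
    · rcases hWxy hc with h | h
      exacts [hxz h, hyz h]
    · simp only [hK, Finset.mem_coe, Finset.mem_image] at hc
      obtain ⟨b, _, rfl⟩ := hc
      exact hkz b.1 b.2
  obtain ⟨m, hmz, hmG⟩ := hz.1 (W ∪ K) hGz
  have hmW : S.Con m W := S.ax2 m (W ∪ K) W Finset.subset_union_left hmG
  refine ⟨m, hmz, W, hWxy, hmW, ?_⟩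
  intro b hb
  have hmk : S.Con m {kf b hb} := by
    refine S.ax2 m (W ∪ K) {kf b hb} ?_ hmG
    intro c hc
    simp only [Finset.mem_singleton] at hc
    subst hc
    exact Finset.mem_union_right _ (Finset.mem_image.2 ⟨⟨b, hb⟩, Finset.mem_attach _ _, rfl⟩)
  have h1 : S.ent m (Zf b hb) b := S.ax10 (kf b hb) m _ b hmk (hCon b hb) (hent b hb)
  have h2 : S.Con m (Zf b hb) := S.ax9 (kf b hb) m hmk _ (hCon b hb)
  refine S.ax5 m (Zf b hb) W b h2 hmW ?_ h1
  intro c hc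
  exact Finset.mem_biUnion.2 ⟨⟨b, hb⟩, Finset.mem_attach _ _, hc⟩

end AuxLemmas

/-- Local least upper bounds of states are computed as unions of principal states. -/
theorem local_lub_states {A : Type*} (S : IWS A) (x y z : Set A)
    (hx : S.state x) (hy : S.state y) (hz : S.state z)
    (hxz : x ⊆ z) (hyz : y ⊆ z) :
    S.state (⋃₀ {w : Set A | ∃ k, ∃ Z : Finset A, S.Con k Z ∧ k ∈ z ∧ ↑Z ⊆ x ∪ y ∧
        w = {a | S.ent k Z a}}) ∧
    x ⊆ ⋃₀ {w : Set A | ∃ k, ∃ Z : Finset A, S.Con k Z ∧ k ∈ z ∧ ↑Z ⊆ x ∪ y ∧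
        w = {a | S.ent k Z a}} ∧
    y ⊆ ⋃₀ {w : Set A | ∃ k, ∃ Z : Finset A, S.Con k Z ∧ k ∈ z ∧ ↑Z ⊆ x ∪ y ∧
        w = {a | S.ent k Z a}} ∧
    (⋃₀ {w : Set A | ∃ k, ∃ Z : Finset A, S.Con k Z ∧ k ∈ z ∧ ↑Z ⊆ x ∪ y ∧
        w = {a | S.ent k Z a}}) ⊆ z ∧
    ∀ w : Set A, S.state w → w ⊆ z → x ⊆ w → y ⊆ w →
      (⋃₀ {u : Set A | ∃ k, ∃ Z : Finset A, S.Con k Z ∧ k ∈ z ∧ ↑Z ⊆ x ∪ y ∧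
        u = {a | S.ent k Z a}}) ⊆ w := by
  classical
  set T : Set A := ⋃₀ {w : Set A | ∃ k, ∃ Z : Finset A, S.Con k Z ∧ k ∈ z ∧ ↑Z ⊆ x ∪ y ∧
      w = {a | S.ent k Z a}} with hT
  have memT : ∀ a, a ∈ T ↔
      ∃ k, ∃ Z : Finset A, S.Con k Z ∧ k ∈ z ∧ ↑Z ⊆ x ∪ y ∧ S.ent k Z a := by
    intro a
    constructor
    · rintro ⟨w, ⟨k, Z, h1, h2, h3, rfl⟩, ha⟩
      exact ⟨k, Z, h1, h2, h3, ha⟩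
    · rintro ⟨k, Z, h1, h2, h3, ha⟩
      exact ⟨_, ⟨k, Z, h1, h2, h3, rfl⟩, ha⟩
  have hxT : x ⊆ T := by
    intro a ha
    obtain ⟨i, hi, X, hXx, hiX, hent⟩ := hx.2.2 a ha
    exact (memT a).2 ⟨i, X, hiX, hxz hi, fun c hc => Or.inl (hXx hc), hent⟩
  have hyT : y ⊆ T := by
    intro a ha
    obtain ⟨i, hi, X, hXy, hiX, hent⟩ := hy.2.2 a ha
    exact (memT a).2 ⟨i, X, hiX, hyz hi, fun c hc => Or.inr (hXy hc), hent⟩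
  have hTz : T ⊆ z := by
    intro a ha
    obtain ⟨k, Z, h1, h2, h3, ha⟩ := (memT a).1 ha
    have hZz : ↑Z ⊆ z := fun c hc => (h3 hc).elim (fun h => hxz h) (fun h => hyz h)
    exact hz.2.1 k h2 Z hZz a h1 ha
  have hstate : S.state T := by
    refine ⟨?_, ?_, ?_⟩
    · -- consistency
      intro F hF
      obtain ⟨m, hmz, W, hWxy, hmW, hent⟩ :=
        S.merge hz hxz hyz F (fun b hb => (memT b).1 (hF hb))
      obtain ⟨e, hme, heF⟩ := S.ax8 m W F hmW hent
      exact ⟨e, (memT e).2 ⟨m, W, hmW, hmz, hWxy, hme⟩, heF⟩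
    · -- closure under entailment
      intro i hi X hX a hiX ha
      obtain ⟨m, hmz, W, hWxy, hmW, hent⟩ :=
        S.merge hz hxz hyz (insert i X) (by
          intro b hb
          rcases Finset.mem_insert.1 hb with rfl | hb
          · exact (memT b).1 hi
          · exact (memT b).1 (hX hb))
      have hmi : S.ent m W i := hent i (Finset.mem_insert_self i X)
      have hmX : ∀ b ∈ X, S.ent m W b := fun b hb =>
        hent b (Finset.mem_insert_of_mem hb)
      have : S.ent m W a := S.principal_closed hmW hmi hmX hiX ha
      exact (memT a).2 ⟨m, W, hmW, hmz, hWxy, this⟩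
    · -- derivability
      intro a ha
      obtain ⟨k, Z, h1, h2, h3, ha⟩ := (memT a).1 ha
      obtain ⟨e, Z', hke, hkZ', heZ', hea⟩ := S.principal_deriv h1 ha
      refine ⟨e, (memT e).2 ⟨k, Z, h1, h2, h3, hke⟩, Z', ?_, heZ', hea⟩
      intro c hc
      exact (memT c).2 ⟨k, Z, h1, h2, h3, hkZ' c hc⟩
  refine ⟨hstate, hxT, hyT, hTz, ?_⟩
  intro w hw hwz hxw hyw a ha
  obtain ⟨k, Z, h1, h2, h3, ha⟩ := (memT a).1 ha
  have hZw : ↑Z ⊆ w := fun c hc => (h3 hc).elim (fun h => hxw h) (fun h => hyw h)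
  obtain ⟨j, hjw, hjZ⟩ := hw.1 Z hZw
  -- bridge witnesses j and k through z
  have hjk : (↑({j, k} : Finset A) : Set A) ⊆ z := by
    intro c hc
    simp only [Finset.coe_insert, Finset.coe_singleton, Set.mem_insert_iff,
      Set.mem_singleton_iff] at hc
    rcases hc with rfl | rfl
    exacts [hwz hjw, h2]
  obtain ⟨m, hmz, hmjk⟩ := hz.1 {j, k} hjk
  have hmk : S.Con m {k} := S.ax2 m {j, k} {k} (by simp) hmjk
  have hmj : S.Con m {j} := S.ax2 m {j, k} {j} (by simp) hmjk
  have hmZa : S.ent m Z a := S.ax10 k m Z a hmk h1 ha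
  have hjZa : S.ent j Z a := S.ax11 j m Z a hmj hjZ hmZa
  exact hw.2.1 j hjw Z hZw a hjZ hjZa
end

section
/- In an information system with witnesses, condition (ALG) holds if and only if condition (SALG) holds, where (SALG) says: for all (i,X) ∈ Con and a ∈ A, if (i,X) ⊢ a then there exists Z ∈ Con(i) with (i,X) ⊢ Z, (i,Z) ⊢ Z, and (i,Z) ⊢ a. -/
/-- Lemma 3.11: condition (ALG) is equivalent to condition (SALG). -/
theorem ALG_iff_SALG {A : Type*} (S : IWS A) :
    (∀ i (X F : Finset A), S.Con i X → (∀ a ∈ F, S.ent i X a) →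
      ∃ j V, S.Con j V ∧ S.ent j V j ∧ (∀ v ∈ V, S.ent j V v) ∧
        S.ent i X j ∧ (∀ v ∈ V, S.ent i X v) ∧ ∀ a ∈ F, S.ent j V a) ↔
    (∀ i (X : Finset A) a, S.Con i X → S.ent i X a →
      ∃ Z, S.Con i Z ∧ (∀ z ∈ Z, S.ent i X z) ∧ (∀ z ∈ Z, S.ent i Z z) ∧
        S.ent i Z a) := by
  constructor
  · intro hALG i X a hCon hEnt
    obtain ⟨j, V, hjV, hjVj, hjVv, hiXj, hiXv, hjVa⟩ :=
      hALG i X {a} hCon (by simpa using hEnt)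
    have hij : S.Con i {j} := S.ax4 i X {j} hCon (by simpa using hiXj)
    have hiV : S.Con i V := S.ax9 j i hij V hjV
    refine ⟨V, hiV, hiXv, ?_, ?_⟩
    · intro v hv
      exact S.ax10 j i V v hij hjV (hjVv v hv)
    · exact S.ax10 j i V a hij hjV (by simpa using hjVa a (by simp))
  · intro hSALG i X F hCon hEnt
    classical
    -- build a uniform Z for the whole finite set F
    have key : ∃ Z : Finset A, S.Con i Z ∧ (∀ z ∈ Z, S.ent i X z) ∧
        (∀ z ∈ Z, S.ent i Z z) ∧ ∀ a ∈ F, S.ent i Z a := by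
      induction F using Finset.induction_on with
      | empty =>
          refine ⟨∅, S.ax2 i {i} ∅ (by simp) (S.ax1 i), by simp, by simp, by simp⟩
      | @insert a F ha ih =>
          obtain ⟨Z, hZCon, hZX, hZZ, hZF⟩ := ih (fun b hb => hEnt b (by simp [hb]))
          obtain ⟨W, hWCon, hWX, hWW, hWa⟩ := hSALG i X a hCon (hEnt a (by simp))
          refine ⟨Z ∪ W, ?_, ?_, ?_, ?_⟩
          · refine S.ax4 i X (Z ∪ W) hCon ?_
            intro b hb
            rcases Finset.mem_union.mp hb with h | h
            · exact hZX b h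
            · exact hWX b h
          · intro b hb
            rcases Finset.mem_union.mp hb with h | h
            · exact hZX b h
            · exact hWX b h
          all_goals {
            first
            | (intro b hb
               have hU : S.Con i (Z ∪ W) := by
                 refine S.ax4 i X (Z ∪ W) hCon ?_
                 intro c hc
                 rcases Finset.mem_union.mp hc with h | h
                 · exact hZX c h
                 · exact hWX c h
               rcases Finset.mem_union.mp hb with h | h
               · exact S.ax5 i Z (Z ∪ W) b hZCon hU Finset.subset_union_left (hZZ b h)
               · exact S.ax5 i W (Z ∪ W) b hWCon hU Finset.subset_union_right (hWW b h))
            | (intro b hb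
               have hU : S.Con i (Z ∪ W) := by
                 refine S.ax4 i X (Z ∪ W) hCon ?_
                 intro c hc
                 rcases Finset.mem_union.mp hc with h | h
                 · exact hZX c h
                 · exact hWX c h
               rcases Finset.mem_insert.mp hb with h | h
               · exact h ▸ S.ax5 i W (Z ∪ W) a hWCon hU Finset.subset_union_right hWa
               · exact S.ax5 i Z (Z ∪ W) b hZCon hU Finset.subset_union_left (hZF b h))
          }
    obtain ⟨Z, hZCon, hZX, hZZ, hZF⟩ := key
    obtain ⟨e, hZe, heZ⟩ := S.ax8 i Z Z hZCon hZZ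
    have hie : S.Con i {e} := S.ax4 i Z {e} hZCon (by simpa using hZe)
    refine ⟨e, Z, heZ, ?_, ?_, ?_, hZX, ?_⟩
    · exact S.ax11 e i Z e hie heZ hZe
    · intro v hv; exact S.ax11 e i Z v hie heZ (hZZ v hv)
    · exact S.ax6 i X Z e hCon hZX hZe
    · intro a ha; exact S.ax11 e i Z a hie heZ (hZF a ha)
end

section
/- Let A, A' be information systems with witnesses and H ⊆ Con × A' satisfy conditions (2), (3), (8) of approximable mappings. Then the conjunction of the left interpolation condition (4) and the conservativity condition (9) is equivalent to: for all (i,X) ∈ Con and finite F ⊆ A', (i,X) H F implies there exists (c,U) ∈ Con with (i,X) ⊢ (c,U) and (c,U) H F. -/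
/-- Lemma 4.2: left interpolation plus conservativity are together equivalent to
the extended left interpolation rule. -/
theorem left_rules_equiv {A A' : Type*} (S : IWS A) (S' : IWS A')
    (rel : A → Finset A → A' → Prop)
    (h2 : ∀ i (X X' : Finset A) b, S.Con i X → S.Con i X' → X ⊆ X' →
      rel i X b → rel i X' b)
    (h3 : ∀ i (X X' : Finset A) b, S.Con i X → (∀ a ∈ X', S.ent i X a) →
      rel i X' b → rel i X b)
    (h8 : ∀ i j (X : Finset A) b, S.Con j {i} → S.Con i X →
      rel i X b → rel j X b) :
    ((∀ i (X : Finset A) b, S.Con i X → rel i X b →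
        ∃ U, S.Con i U ∧ (∀ u ∈ U, S.ent i X u) ∧ rel i U b) ∧
     (∀ i j (X : Finset A) b, S.Con j {i} → S.Con i X →
        rel j X b → rel i X b)) ↔
    (∀ i (X : Finset A) (F : Finset A'), S.Con i X → (∀ b ∈ F, rel i X b) →
      ∃ c U, S.Con c U ∧ S.ent i X c ∧ (∀ u ∈ U, S.ent i X u) ∧
        ∀ b ∈ F, rel c U b) := by
  classical
  constructor
  · rintro ⟨h4, h9⟩ i X F hX hF
    choose f hfCon hfEnt hfRel using fun b (hb : b ∈ F) => h4 i X b hX (hF b hb)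
    set U : Finset A := F.attach.biUnion (fun b => f b.1 b.2) with hU
    have hUent : ∀ u ∈ U, S.ent i X u := by
      intro u hu
      simp only [hU, Finset.mem_biUnion, Finset.mem_attach, true_and] at hu
      obtain ⟨b, hb⟩ := hu
      exact hfEnt b.1 b.2 u hb
    have hUCon : S.Con i U := S.ax4 i X U hX hUent
    have hrelU : ∀ b ∈ F, rel i U b := by
      intro b hb
      refine h2 i (f b hb) U b (hfCon b hb) hUCon ?_ (hfRel b hb)
      intro u hu
      simp only [hU, Finset.mem_biUnion, Finset.mem_attach, true_and]
      exact ⟨⟨b, hb⟩, hu⟩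
    obtain ⟨e, heEnt, heCon⟩ := S.ax8 i X U hX hUent
    have hie : S.Con i {e} := S.ax4 i X {e} hX (by simpa using heEnt)
    refine ⟨e, U, heCon, heEnt, hUent, fun b hb => ?_⟩
    exact h9 e i U b hie heCon (hrelU b hb)
  · intro hE
    constructor
    · intro i X b hX hrel
      obtain ⟨c, U, hcU, hic, hiu, hrel'⟩ := hE i X {b} hX (by simpa using hrel)
      have hic' : S.Con i {c} := S.ax4 i X {c} hX (by simpa using hic)
      refine ⟨U, S.ax4 i X U hX hiu, hiu, ?_⟩
      exact h8 c i U b hic' hcU (hrel' b (by simp))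
    · intro i j X b hji hiX hrel
      have hjX : S.Con j X := S.ax9 i j hji X hiX
      obtain ⟨c, U, hcU, hjc, hju, hrel'⟩ := hE j X {b} hjX (by simpa using hrel)
      have hic : S.ent i X c := S.ax11 i j X c hji hiX hjc
      have hiu : ∀ u ∈ U, S.ent i X u := fun u hu => S.ax11 i j X u hji hiX (hju u hu)
      have hic' : S.Con i {c} := S.ax4 i X {c} hiX (by simpa using hic)
      have hrelU : rel i U b := h8 c i U b hic' hcU (hrel' b (by simp))
      exact h3 i X U b hiX hiu hrelU
end

section
/- Let A, A' be information systems with witnesses and H ⊆ Con × A'. Then the right interpolation condition (6) together with the witness generation condition (7) of approximable mappings is equivalent to: for all (i,X) ∈ Con and finite F ⊆ A', (i,X) H F implies there exists (e,V) ∈ Con' with (i,X) H (e,V) and (e,V) ⊢' F. -/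
/-- Lemma 4.3: right interpolation plus witness generation are together
equivalent to the extended right interpolation rule. -/
theorem right_rules_equiv {A A' : Type*} (S : IWS A) (S' : IWS A')
    (rel : A → Finset A → A' → Prop) :
    ((∀ i (X : Finset A) b, S.Con i X → rel i X b →
        ∃ d V, S'.Con d V ∧ rel i X d ∧ (∀ v ∈ V, rel i X v) ∧ S'.ent d V b) ∧
     (∀ i (X : Finset A) (F : Finset A'), S.Con i X → (∀ c ∈ F, rel i X c) →
        ∃ e, rel i X e ∧ S'.Con e F)) ↔
    (∀ i (X : Finset A) (F : Finset A'), S.Con i X → (∀ b ∈ F, rel i X b) →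
      ∃ e V, S'.Con e V ∧ rel i X e ∧ (∀ v ∈ V, rel i X v) ∧
        ∀ b ∈ F, S'.ent e V b) := by
  constructor
  · rintro ⟨h6, h7⟩ i X F hCon hF
    classical
    -- choose interpolants for each b ∈ F
    have hch : ∀ b ∈ F, ∃ p : A' × Finset A', S'.Con p.1 p.2 ∧ rel i X p.1 ∧
        (∀ v ∈ p.2, rel i X v) ∧ S'.ent p.1 p.2 b := by
      intro b hb
      obtain ⟨d, V, h1, h2, h3, h4⟩ := h6 i X b hCon (hF b hb)
      exact ⟨⟨d, V⟩, h1, h2, h3, h4⟩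
    choose! p hp1 hp2 hp3 hp4 using hch
    set W : Finset A' := F.biUnion (fun b => insert (p b).1 (p b).2) with hW
    have hWrel : ∀ c ∈ W, rel i X c := by
      intro c hc
      rw [hW, Finset.mem_biUnion] at hc
      obtain ⟨b, hb, hc⟩ := hc
      rcases Finset.mem_insert.mp hc with h | h
      · exact h ▸ hp2 b hb
      · exact hp3 b hb c h
    obtain ⟨e, he, heW⟩ := h7 i X W hCon hWrel
    refine ⟨e, W, heW, he, hWrel, ?_⟩
    intro b hb
    have hsub : insert (p b).1 (p b).2 ⊆ W := by
      intro c hc; rw [hW, Finset.mem_biUnion]; exact ⟨b, hb, hc⟩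
    have hd : S'.Con e {(p b).1} := by
      refine S'.ax2 e W {(p b).1} ?_ heW
      intro c hc
      rw [Finset.mem_singleton] at hc
      exact hc ▸ hsub (Finset.mem_insert_self _ _)
    have hVsub : (p b).2 ⊆ W := fun c hc =>
      hsub (Finset.mem_insert_of_mem hc)
    have h1 : S'.ent e (p b).2 b := S'.ax10 _ e _ b hd (hp1 b hb) (hp4 b hb)
    exact S'.ax5 e (p b).2 W b (S'.ax2 e W _ hVsub heW) heW hVsub h1
  · intro h
    constructor
    · intro i X b hCon hb
      obtain ⟨e, V, h1, h2, h3, h4⟩ := h i X {b} hCon (by simpa using hb)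
      exact ⟨e, V, h1, h2, h3, h4 b (Finset.mem_singleton_self b)⟩
    · intro i X F hCon hF
      obtain ⟨e, V, h1, h2, h3, h4⟩ := h i X F hCon hF
      exact ⟨e, h2, S'.ax4 e V F h1 h4⟩
end

section
/- Let A, A', A'' be information systems with witnesses, H: A ⊦ A' and G: A' ⊦ A'' approximable mappings, and define (i,X) (H∘G) c iff there exists (j,Y) ∈ Con' with (i,X) H (j,Y) and (j,Y) G c. Then H∘G is an approximable mapping from A to A''. Moreover, the entailment relation Id_A (given by (i,X) Id_A a iff (i,X) ⊢ a) is an approximable mapping from A to A, and H ∘ Id_{A'} = H = Id_A ∘ H. -/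
/-- Composition of relations between information systems. -/
def iwsCompRel {A A' A'' : Type*} (S' : IWS A')
    (h : A → Finset A → A' → Prop) (g : A' → Finset A' → A'' → Prop) :
    A → Finset A → A'' → Prop :=
  fun i X c => ∃ j Y, S'.Con j Y ∧ h i X j ∧ (∀ y ∈ Y, h i X y) ∧ g j Y c

section Aux

variable {A A' A'' : Type*} {S : IWS A} {S' : IWS A'} {S'' : IWS A''}

/-- Consistency of a singleton witness from entailment. -/
lemma IWS.con_singleton (S : IWS A) {i : A} {X : Finset A} {a : A}
    (hX : S.Con i X) (h : S.ent i X a) : S.Con i {a} :=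
  S.ax4 i X {a} hX (by simpa using h)

/-- For finitely many images, we can interpolate a single entailed set. -/
lemma appmap_interp (H : AppMap S S') {i : A} {X : Finset A} (hX : S.Con i X)
    (T : Finset A') (hT : ∀ t ∈ T, H.rel i X t) :
    ∃ U, S.Con i U ∧ (∀ u ∈ U, S.ent i X u) ∧ ∀ t ∈ T, H.rel i U t := by
  classical
  induction T using Finset.induction_on with
  | empty =>
    exact ⟨∅, S.ax2 i X ∅ (Finset.empty_subset _) hX, by simp, by simp⟩
  | @insert a T ha ih =>
    obtain ⟨U, hU, hUe, hUrel⟩ := ih fun t ht => hT t (Finset.mem_insert_of_mem ht)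
    obtain ⟨U', hU', hU'e, hU'rel⟩ := H.am4 i X a hX (hT a (Finset.mem_insert_self a T))
    have hUe' : ∀ u ∈ U ∪ U', S.ent i X u := by
      intro u hu
      rcases Finset.mem_union.1 hu with hu | hu
      · exact hUe u hu
      · exact hU'e u hu
    have hcon : S.Con i (U ∪ U') := S.ax4 i X (U ∪ U') hX hUe'
    refine ⟨U ∪ U', hcon, hUe', ?_⟩
    intro t ht
    rcases Finset.mem_insert.1 ht with rfl | ht
    · exact H.am2 i U' (U ∪ U') t hU' hcon Finset.subset_union_right hU'rel
    · exact H.am2 i U (U ∪ U') t hU hcon Finset.subset_union_left (hUrel t ht)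

/-- Finitely many composite images can be realized by a single middle pair. -/
lemma comp_merge (H : AppMap S S') (G : AppMap S' S'') {i : A} {X : Finset A}
    (hX : S.Con i X) (T : Finset A'')
    (hT : ∀ t ∈ T, iwsCompRel S' H.rel G.rel i X t) :
    ∃ e W, S'.Con e W ∧ H.rel i X e ∧ (∀ w ∈ W, H.rel i X w) ∧
      ∀ t ∈ T, G.rel e W t := by
  classical
  induction T using Finset.induction_on with
  | empty =>
    obtain ⟨e, he, hce⟩ := H.am7 i X ∅ hX (by simp)
    exact ⟨e, ∅, hce, he, by simp, by simp⟩
  | @insert t T ht ih =>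
    obtain ⟨e, W, hConW, heX, hWX, hWrel⟩ :=
      ih fun t' ht' => hT t' (Finset.mem_insert_of_mem ht')
    obtain ⟨j, Y, hConY, hjX, hYX, hGt⟩ := hT t (Finset.mem_insert_self t T)
    set V : Finset A' := insert e (insert j (W ∪ Y)) with hV
    have hVX : ∀ v ∈ V, H.rel i X v := by
      intro v hv
      rcases Finset.mem_insert.1 hv with rfl | hv
      · exact heX
      rcases Finset.mem_insert.1 hv with rfl | hv
      · exact hjX
      rcases Finset.mem_union.1 hv with hv | hv
      · exact hWX v hv
      · exact hYX v hv
    obtain ⟨e', he', hConV⟩ := H.am7 i X V hX hVX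
    have hWY_sub : W ∪ Y ⊆ V := by
      intro v hv
      exact Finset.mem_insert_of_mem (Finset.mem_insert_of_mem hv)
    have hConWY : S'.Con e' (W ∪ Y) := S'.ax2 e' V (W ∪ Y) hWY_sub hConV
    have hCone : S'.Con e' {e} := S'.ax2 e' V {e}
      (by simp [hV]) hConV
    have hConj : S'.Con e' {j} := S'.ax2 e' V {j}
      (by simp [hV]) hConV
    have hConW' : S'.Con e' W :=
      S'.ax2 e' (W ∪ Y) W Finset.subset_union_left hConWY
    have hConY' : S'.Con e' Y :=
      S'.ax2 e' (W ∪ Y) Y Finset.subset_union_right hConWY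
    refine ⟨e', W ∪ Y, hConWY, he', ?_, ?_⟩
    · intro w hw
      rcases Finset.mem_union.1 hw with hw | hw
      · exact hWX w hw
      · exact hYX w hw
    · intro t' ht'
      rcases Finset.mem_insert.1 ht' with rfl | ht'
      · have h1 : G.rel e' Y t' := G.am8 j e' Y t' hConj hConY hGt
        exact G.am2 e' Y (W ∪ Y) t' hConY' hConWY Finset.subset_union_right h1
      · have h1 : G.rel e' W t' := G.am8 e e' W t' hCone hConW (hWrel t' ht')
        exact G.am2 e' W (W ∪ Y) t' hConW' hConWY Finset.subset_union_left h1

/-- The composition of two approximable mappings. -/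
def compAppMap (H : AppMap S S') (G : AppMap S' S'') : AppMap S S'' where
  rel := iwsCompRel S' H.rel G.rel
  relCon := fun i X _ ⟨j, _, _, hj, _, _⟩ => H.relCon i X j hj
  am1 := ⟨S'.Δ, ∅,
    S'.ax2 S'.Δ {S'.Δ} ∅ (Finset.empty_subset _) (S'.ax1 S'.Δ),
    H.am1, by simp, G.am1⟩
  am2 := by
    rintro i X X' b hX hX' hsub ⟨j, Y, hY, hj, hy, hG⟩
    exact ⟨j, Y, hY, H.am2 i X X' j hX hX' hsub hj,
      fun y hyY => H.am2 i X X' y hX hX' hsub (hy y hyY), hG⟩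
  am3 := by
    rintro i X X' b hX hent ⟨j, Y, hY, hj, hy, hG⟩
    exact ⟨j, Y, hY, H.am3 i X X' j hX hent hj,
      fun y hyY => H.am3 i X X' y hX hent (hy y hyY), hG⟩
  am4 := by
    classical
    rintro i X b hX ⟨j, Y, hY, hj, hy, hG⟩
    obtain ⟨U, hU, hUe, hUrel⟩ := appmap_interp H hX (insert j Y)
      (by
        intro t ht
        rcases Finset.mem_insert.1 ht with rfl | ht
        · exact hj
        · exact hy t ht)
    exact ⟨U, hU, hUe, j, Y, hY, hUrel j (Finset.mem_insert_self j Y),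
      fun y hyY => hUrel y (Finset.mem_insert_of_mem hyY), hG⟩
  am5 := by
    classical
    rintro i X k Y b hX hkY hk hy hent
    obtain ⟨e, W, hConW, heX, hWX, hWrel⟩ := comp_merge H G hX (insert k Y)
      (by
        intro t ht
        rcases Finset.mem_insert.1 ht with rfl | ht
        · exact hk
        · exact hy t ht)
    refine ⟨e, W, hConW, heX, hWX, ?_⟩
    exact G.am5 e W k Y b hConW hkY (hWrel k (Finset.mem_insert_self k Y))
      (fun y hyY => hWrel y (Finset.mem_insert_of_mem hyY)) hent
  am6 := by
    rintro i X b hX ⟨j, Y, hY, hj, hy, hG⟩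
    obtain ⟨d, V, hdV, hGd, hGv, hent⟩ := G.am6 j Y b hY hG
    exact ⟨d, V, hdV, ⟨j, Y, hY, hj, hy, hGd⟩,
      fun v hv => ⟨j, Y, hY, hj, hy, hGv v hv⟩, hent⟩
  am7 := by
    rintro i X F hX hF
    obtain ⟨e, W, hConW, heX, hWX, hWrel⟩ := comp_merge H G hX F hF
    obtain ⟨e'', he'', hCon''⟩ := G.am7 e W F hConW hWrel
    exact ⟨e'', ⟨e, W, hConW, heX, hWX, he''⟩, hCon''⟩
  am8 := by
    rintro i j X b hji hX ⟨j', Y, hY, hj', hy, hG⟩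
    exact ⟨j', Y, hY, H.am8 i j X j' hji hX hj',
      fun y hyY => H.am8 i j X y hji hX (hy y hyY), hG⟩
  am9 := by
    rintro i j X b hji hX ⟨j', Y, hY, hj', hy, hG⟩
    exact ⟨j', Y, hY, H.am9 i j X j' hji hX hj',
      fun y hyY => H.am9 i j X y hji hX (hy y hyY), hG⟩

/-- The entailment relation as an approximable mapping. -/
def idAppMap (S : IWS A) : AppMap S S where
  rel := S.ent
  relCon := S.entCon
  am1 := S.ax3 S.Δ
  am2 := fun i X X' b hX hX' hsub h => S.ax5 i X X' b hX hX' hsub h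
  am3 := fun i X X' b hX hent h => S.ax6 i X X' b hX hent h
  am4 := fun i X b _ h => S.ax7 i X b h
  am5 := by
    intro i X k Y b hX hkY hik hy hent
    have hik' : S.Con i {k} := S.con_singleton hX hik
    have hent' : S.ent i Y b := S.ax10 k i Y b hik' hkY hent
    exact S.ax6 i X Y b hX hy hent'
  am6 := by
    intro i X b hX h
    obtain ⟨Z, hZ, hZe, hZb⟩ := S.ax7 i X b h
    obtain ⟨e, he, hce⟩ := S.ax8 i X Z hX hZe
    have hie : S.Con i {e} := S.con_singleton hX he
    have heZ : S.ent e Z b := S.ax11 e i Z b hie hce hZb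
    exact ⟨e, Z, hce, he, hZe, heZ⟩
  am7 := fun i X F hX h => S.ax8 i X F hX h
  am8 := fun i j X b hji hX h => S.ax10 i j X b hji hX h
  am9 := fun i j X b hji hX h => S.ax11 i j X b hji hX h

end Aux

/-- Composition of approximable mappings is an approximable mapping, entailment
is an approximable mapping, and it is a two-sided identity for composition. -/
theorem appmap_comp_id {A A' A'' : Type*} (S : IWS A) (S' : IWS A') (S'' : IWS A'')
    (H : AppMap S S') (G : AppMap S' S'') :
    (∃ K : AppMap S S'', K.rel = iwsCompRel S' H.rel G.rel) ∧
    (∃ I : AppMap S S, I.rel = S.ent) ∧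
    iwsCompRel S' H.rel S'.ent = H.rel ∧
    iwsCompRel S S.ent H.rel = H.rel := by
  refine ⟨⟨compAppMap H G, rfl⟩, ⟨idAppMap S, rfl⟩, ?_, ?_⟩
  · funext i X b
    apply propext
    constructor
    · rintro ⟨j, Y, hY, hj, hy, hent⟩
      exact H.am5 i X j Y b (H.relCon i X j hj) hY hj hy hent
    · intro h
      obtain ⟨d, V, hdV, hd, hv, hent⟩ := H.am6 i X b (H.relCon i X b h) h
      exact ⟨d, V, hdV, hd, hv, hent⟩
  · funext i X c
    apply propext
    constructor
    · rintro ⟨j, Y, hjY, hij, hiy, hH⟩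
      have hX : S.Con i X := S.entCon i X j hij
      have hij' : S.Con i {j} := S.con_singleton hX hij
      have hiYc : H.rel i Y c := H.am8 j i Y c hij' hjY hH
      exact H.am3 i X Y c hX hiy hiYc
    · intro h
      have hX : S.Con i X := H.relCon i X c h
      obtain ⟨U, hU, hUe, hUrel⟩ := H.am4 i X c hX h
      obtain ⟨e, hee, heU⟩ := S.ax8 i X U hX hUe
      have hie : S.Con i {e} := S.con_singleton hX hee
      have heUc : H.rel e U c := H.am9 e i U c hie heU hUrel
      exact ⟨e, U, heU, hee, hUe, heUc⟩
end
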